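/- arXiv:2511.21915 — 2 statements merged into one kernel-verified Lean document; each statement's English description precedes it below -/
import Mathlib

section
/- Let x, x′ ∈ [0,1) be dyadic rationals and let Ω ∈ ℕ be such that 2^Ω x and 2^Ω x′ are both integers. Then for every real h with 0 < h < 2^{−Ω} and x + h < 1, one has (x + h) ⊕ x′ = (x ⊕ x′) + h. Consequently, at every pair of dyadic rationals x, x′ ∈ [0,1) the right partial derivative of the map (x, x′) ↦ x ⊕ x′ in each argument exists and equals 1: lim_{h → 0⁺} ((x + h) ⊕ x′ − (x ⊕ x′))/h = 1 and lim_{h → 0⁺} (x ⊕ (x′ + h) − (x ⊕ x′))/h = 1. -/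
noncomputable def binDigit (ℓ : ℕ) (x : ℝ) : ℕ := (⌊(2 : ℝ) ^ ℓ * x⌋).toNat % 2

noncomputable def xorBin (x y : ℝ) : ℝ :=
  ∑' ℓ : ℕ,
    (((binDigit (ℓ + 1) x + binDigit (ℓ + 1) y) % 2 : ℕ) : ℝ) * (2 : ℝ) ^ (-((ℓ : ℤ) + 1))

lemma w_eq (ℓ : ℕ) : (2 : ℝ) ^ (-((ℓ : ℤ) + 1)) = (1/2)^(ℓ+1) := by
  rw [zpow_neg, one_div, inv_pow]
  norm_cast

lemma summable_aux (c : ℕ → ℕ) (hc : ∀ ℓ, c ℓ ≤ 1) :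
    Summable (fun ℓ : ℕ => (c ℓ : ℝ) * (2 : ℝ) ^ (-((ℓ : ℤ) + 1))) := by
  apply Summable.of_nonneg_of_le (fun ℓ => by positivity) (fun ℓ => ?_)
    (summable_geometric_of_lt_one (by norm_num) (by norm_num : (1/2 : ℝ) < 1))
  rw [w_eq]
  calc (c ℓ : ℝ) * (1/2)^(ℓ+1) ≤ 1 * (1/2)^(ℓ+1) := by
        apply mul_le_mul_of_nonneg_right _ (by positivity)
        exact_mod_cast hc ℓ
    _ ≤ (1/2)^ℓ := by
        rw [one_mul, pow_succ]
        nlinarith [pow_pos (by norm_num : (0:ℝ) < 1/2) ℓ]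

lemma binDigit_le_one (ℓ : ℕ) (x : ℝ) : binDigit ℓ x ≤ 1 :=
  Nat.le_of_lt_succ (Nat.mod_lt _ (by norm_num))

lemma partial_sum_eq (y : ℝ) (hy : y ∈ Set.Ico (0:ℝ) 1) (n : ℕ) :
    ∑ ℓ ∈ Finset.range n, (binDigit (ℓ+1) y : ℝ) * (2:ℝ)^(-((ℓ:ℤ)+1))
      = (⌊(2:ℝ)^n * y⌋ : ℝ) / 2^n := by
  induction n with
  | zero =>
      simp only [Finset.range_zero, Finset.sum_empty, pow_zero, one_mul]
      rw [Int.floor_eq_zero_iff.2 (by exact ⟨hy.1, hy.2⟩)]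
      simp
  | succ n ih =>
      rw [Finset.sum_range_succ, ih]
      have h2 : (2:ℝ)^(n+1) * y = 2 * ((2:ℝ)^n * y) := by ring
      have h1 : 2 * ⌊(2:ℝ)^n * y⌋ ≤ ⌊(2:ℝ)^(n+1) * y⌋ := by
        rw [h2, Int.le_floor]
        push_cast
        nlinarith [Int.floor_le ((2:ℝ)^n * y)]
      have h2' : ⌊(2:ℝ)^(n+1) * y⌋ ≤ 2 * ⌊(2:ℝ)^n * y⌋ + 1 := by
        have : ⌊(2:ℝ)^(n+1) * y⌋ < 2 * ⌊(2:ℝ)^n * y⌋ + 2 := by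
          rw [h2, Int.floor_lt]
          push_cast
          nlinarith [Int.lt_floor_add_one ((2:ℝ)^n * y)]
        omega
      have hBnn : 0 ≤ ⌊(2:ℝ)^(n+1) * y⌋ :=
        Int.floor_nonneg.2 (mul_nonneg (by positivity) hy.1)
      have hbd : (binDigit (n+1) y : ℤ) = ⌊(2:ℝ)^(n+1) * y⌋ - 2 * ⌊(2:ℝ)^n * y⌋ := by
        unfold binDigit
        push_cast [Int.toNat_of_nonneg hBnn]
        omega
      have hbd' : (binDigit (n+1) y : ℝ)
          = (⌊(2:ℝ)^(n+1) * y⌋ : ℝ) - 2 * (⌊(2:ℝ)^n * y⌋ : ℝ) := by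
        exact_mod_cast congrArg (Int.cast : ℤ → ℝ) hbd
      rw [hbd', w_eq]
      have hpn : (0:ℝ) < 2^n := by positivity
      rw [div_pow, one_pow]
      field_simp
      ring

lemma hasSum_binExpansion (y : ℝ) (hy : y ∈ Set.Ico (0:ℝ) 1) :
    HasSum (fun ℓ : ℕ => (binDigit (ℓ+1) y : ℝ) * (2:ℝ)^(-((ℓ:ℤ)+1))) y := by
  have hsum : Summable (fun ℓ : ℕ => (binDigit (ℓ+1) y : ℝ) * (2:ℝ)^(-((ℓ:ℤ)+1))) :=
    summable_aux _ (fun ℓ => binDigit_le_one _ _)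
  have htend : Filter.Tendsto
      (fun n => ∑ ℓ ∈ Finset.range n, (binDigit (ℓ+1) y : ℝ) * (2:ℝ)^(-((ℓ:ℤ)+1)))
      Filter.atTop (nhds y) := by
    have hlow : Filter.Tendsto (fun n : ℕ => y - (1/2:ℝ)^n) Filter.atTop (nhds y) := by
      have := tendsto_pow_atTop_nhds_zero_of_lt_one
        (by norm_num : (0:ℝ) ≤ 1/2) (by norm_num : (1/2:ℝ) < 1)
      simpa using (tendsto_const_nhds.sub this)
    apply tendsto_of_tendsto_of_tendsto_of_le_of_le hlow tendsto_const_nhds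
    · intro n
      dsimp only
      rw [partial_sum_eq y hy n]
      have h1 : (2:ℝ)^n * y - 1 < (⌊(2:ℝ)^n * y⌋ : ℝ) := by
        have := Int.lt_floor_add_one ((2:ℝ)^n * y); linarith
      have hpn : (0:ℝ) < 2^n := by positivity
      rw [sub_le_iff_le_add, div_add' _ _ _ (ne_of_gt hpn), le_div_iff₀ hpn]
      have h12 : ((1:ℝ)/2)^n * 2^n = 1 := by
        rw [one_div, inv_pow, inv_mul_cancel₀ (ne_of_gt hpn)]
      nlinarith
    · intro n
      dsimp only
      rw [partial_sum_eq y hy n]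
      have h1 : (⌊(2:ℝ)^n * y⌋ : ℝ) ≤ (2:ℝ)^n * y := Int.floor_le _
      have hpn : (0:ℝ) < 2^n := by positivity
      rw [div_le_iff₀ hpn]
      nlinarith
  have := hsum.hasSum.tendsto_sum_nat
  have heq : (∑' ℓ : ℕ, (binDigit (ℓ+1) y : ℝ) * (2:ℝ)^(-((ℓ:ℤ)+1))) = y :=
    tendsto_nhds_unique this htend
  have h2 := hsum.hasSum
  rwa [heq] at h2

lemma floor_div_pow_add (a m : ℕ) (ε : ℝ) (hε0 : 0 ≤ ε) (hε : ε < 1 / 2^m) :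
    ⌊(a:ℝ)/2^m + ε⌋ = (a / 2^m : ℕ) := by
  have hpm : (0:ℝ) < 2^m := by positivity
  have h1 : ((a / 2^m : ℕ) : ℝ) * 2^m ≤ (a:ℝ) := by
    exact_mod_cast Nat.cast_le.2 (Nat.div_mul_le_self a (2^m))
  have h2n : a + 1 ≤ (a / 2^m + 1) * 2^m :=
    Nat.succ_le_of_lt ((Nat.div_lt_iff_lt_mul (pow_pos (by norm_num) m)).1
      (by omega))
  have h2 : (a:ℝ) + 1 ≤ (((a / 2^m : ℕ) : ℝ) + 1) * 2^m := by exact_mod_cast h2n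
  have hε2 : ε * 2^m < 1 := (lt_div_iff₀ hpm).1 hε
  have key1 : ((a / 2^m : ℕ) : ℝ) ≤ (a:ℝ)/2^m := (le_div_iff₀ hpm).2 h1
  have key2 : (a:ℝ)/2^m + ε < ((a / 2^m : ℕ) : ℝ) + 1 := by
    have : (a:ℝ)/2^m < ((a / 2^m : ℕ) : ℝ) + 1 - ε := by
      rw [div_lt_iff₀ hpm]; nlinarith
    linarith
  have key1' : ((a / 2^m : ℕ) : ℝ) ≤ (a:ℝ)/2^m + ε := by linarith
  rw [Int.floor_eq_iff]
  exact ⟨by exact_mod_cast key1', by exact_mod_cast key2⟩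

-- 2^Ω * 2^(-Ω) = 1
lemma pow_mul_zpow_neg (Ω : ℕ) : (2:ℝ)^Ω * (2:ℝ)^(-(Ω:ℤ)) = 1 := by
  rw [← zpow_natCast (2:ℝ) Ω, ← zpow_add₀ (by norm_num : (2:ℝ) ≠ 0)]
  simp

-- digit of small h is 0 for positions ≤ Ω
lemma digit_small (Ω k : ℕ) (hk : k ≤ Ω) (h : ℝ) (h0 : 0 ≤ h) (h1 : h < (2:ℝ)^(-(Ω:ℤ))) :
    binDigit k h = 0 := by
  have hfl : ⌊(2:ℝ)^k * h⌋ = 0 := by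
    rw [Int.floor_eq_zero_iff]
    constructor
    · positivity
    · have hle : (2:ℝ)^k ≤ 2^Ω := pow_le_pow_right₀ (by norm_num) hk
      have := pow_mul_zpow_neg Ω
      calc (2:ℝ)^k * h ≤ 2^Ω * h := by nlinarith [h0]
        _ < 2^Ω * (2:ℝ)^(-(Ω:ℤ)) := by
            apply mul_lt_mul_of_pos_left h1 (by positivity)
        _ = 1 := this
  unfold binDigit
  rw [hfl]
  rfl

-- low digits unchanged by adding a small h
lemma digit_low (Ω k a : ℕ) (hk : k ≤ Ω) (h : ℝ) (h0 : 0 ≤ h) (h1 : h < (2:ℝ)^(-(Ω:ℤ))) :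
    binDigit k ((a:ℝ)/2^Ω + h) = binDigit k ((a:ℝ)/2^Ω) := by
  set m := Ω - k with hm
  have hOm : Ω = k + m := by omega
  have hsplit : (2:ℝ)^Ω = 2^k * 2^m := by rw [hOm, pow_add]
  have hpow : ∀ ε : ℝ, (2:ℝ)^k * ((a:ℝ)/2^Ω + ε) = (a:ℝ)/2^m + 2^k * ε := by
    intro ε
    rw [hsplit]
    field_simp
  have hεbound : (2:ℝ)^k * h < 1 / 2^m := by
    have h2 : (2:ℝ)^k * h < 2^k * (2:ℝ)^(-(Ω:ℤ)) :=
      mul_lt_mul_of_pos_left h1 (by positivity)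
    have h3 : (2:ℝ)^k * (2:ℝ)^(-(Ω:ℤ)) = 1 / 2^m := by
      have := pow_mul_zpow_neg Ω
      rw [hsplit] at this
      field_simp
      nlinarith
    linarith [h3 ▸ h2]
  have hpow0 : (2:ℝ)^k * ((a:ℝ)/2^Ω) = (a:ℝ)/2^m + 0 := by
    have := hpow 0
    rw [mul_zero, add_zero] at this
    rw [this]
  unfold binDigit
  rw [hpow h, hpow0]
  rw [floor_div_pow_add a m ((2:ℝ)^k * h) (by positivity) hεbound,
    floor_div_pow_add a m 0 le_rfl (by positivity)]

-- high digits of x vanish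
lemma digit_high_x (Ω k a : ℕ) (hk : Ω < k) :
    binDigit k ((a:ℝ)/2^Ω) = 0 := by
  set t := k - Ω with ht
  have hkt : k = Ω + t := by omega
  have htpos : 1 ≤ t := by omega
  have hval : (2:ℝ)^k * ((a:ℝ)/2^Ω) = ((a * 2^t : ℕ) : ℝ) := by
    rw [hkt, pow_add]
    push_cast
    field_simp
  unfold binDigit
  rw [hval, Int.floor_natCast]
  rw [Int.toNat_natCast]
  obtain ⟨s, hs⟩ : ∃ s, t = s + 1 := ⟨t - 1, by omega⟩
  rw [hs, pow_succ, ← mul_assoc]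
  simp [Nat.mul_mod]

-- high digits of x + h equal digits of h
lemma digit_high_add (Ω k a : ℕ) (hk : Ω < k) (h : ℝ) (h0 : 0 ≤ h) :
    binDigit k ((a:ℝ)/2^Ω + h) = binDigit k h := by
  set t := k - Ω with ht
  have hkt : k = Ω + t := by omega
  have hval : (2:ℝ)^k * ((a:ℝ)/2^Ω + h) = ((a * 2^t : ℕ) : ℝ) + 2^k * h := by
    rw [hkt, pow_add]
    push_cast
    field_simp
  have hfl : ⌊(2:ℝ)^k * ((a:ℝ)/2^Ω + h)⌋ = (a * 2^t : ℕ) + ⌊(2:ℝ)^k * h⌋ := by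
    rw [hval]
    exact_mod_cast Int.floor_intCast_add ((a * 2^t : ℕ) : ℤ) ((2:ℝ)^k * h)
  have hflnn : 0 ≤ ⌊(2:ℝ)^k * h⌋ := Int.floor_nonneg.2 (by positivity)
  unfold binDigit
  rw [hfl, Int.toNat_add (by positivity) hflnn]
  have : ((a * 2^t : ℕ) : ℤ).toNat = a * 2^t := Int.toNat_natCast _
  rw [this]
  obtain ⟨s, hs⟩ : ∃ s, t = s + 1 := ⟨t - 1, by omega⟩
  rw [hs, pow_succ, ← mul_assoc]
  omega

lemma xorBin_comm (x y : ℝ) : xorBin x y = xorBin y x := by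
  unfold xorBin
  exact tsum_congr fun ℓ => by rw [Nat.add_comm]

lemma xorBin_key (x x' : ℝ) (hx : x ∈ Set.Ico (0 : ℝ) 1) (hx' : x' ∈ Set.Ico (0 : ℝ) 1)
    (Ω : ℕ) (hdx : ∃ a : ℕ, x = (a : ℝ) / 2 ^ Ω) (hdx' : ∃ a : ℕ, x' = (a : ℝ) / 2 ^ Ω)
    (h : ℝ) (h0 : 0 < h) (h1 : h < (2 : ℝ) ^ (-(Ω : ℤ))) :
    xorBin (x + h) x' = xorBin x x' + h := by
  obtain ⟨a, ha⟩ := hdx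
  obtain ⟨a', ha'⟩ := hdx'
  have hh1 : h < 1 := by
    have : (2:ℝ)^(-(Ω:ℤ)) ≤ 1 := by
      have := pow_mul_zpow_neg Ω
      have hp : (1:ℝ) ≤ 2^Ω := one_le_pow₀ (by norm_num)
      nlinarith [zpow_pos (by norm_num : (0:ℝ) < 2) (-(Ω:ℤ))]
    linarith
  have hhmem : h ∈ Set.Ico (0:ℝ) 1 := ⟨h0.le, hh1⟩
  have hdsum : HasSum (fun ℓ : ℕ => (binDigit (ℓ+1) h : ℝ) * (2:ℝ)^(-((ℓ:ℤ)+1))) h :=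
    hasSum_binExpansion h hhmem
  have hgsum : Summable (fun ℓ : ℕ =>
      (((binDigit (ℓ+1) x + binDigit (ℓ+1) x') % 2 : ℕ) : ℝ) * (2:ℝ)^(-((ℓ:ℤ)+1))) :=
    summable_aux _ (fun ℓ => Nat.le_of_lt_succ (Nat.mod_lt _ (by norm_num)))
  have term_eq : ∀ ℓ : ℕ,
      (((binDigit (ℓ+1) (x+h) + binDigit (ℓ+1) x') % 2 : ℕ) : ℝ) * (2:ℝ)^(-((ℓ:ℤ)+1))
      = (((binDigit (ℓ+1) x + binDigit (ℓ+1) x') % 2 : ℕ) : ℝ) * (2:ℝ)^(-((ℓ:ℤ)+1))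
        + (binDigit (ℓ+1) h : ℝ) * (2:ℝ)^(-((ℓ:ℤ)+1)) := by
    intro ℓ
    by_cases hc : ℓ + 1 ≤ Ω
    · rw [ha, digit_low Ω (ℓ+1) a hc h h0.le h1, digit_small Ω (ℓ+1) hc h h0.le h1]
      push_cast
      ring
    · push_neg at hc
      rw [ha, ha', digit_high_add Ω (ℓ+1) a hc h h0.le,
        digit_high_x Ω (ℓ+1) a hc, digit_high_x Ω (ℓ+1) a' hc]
      have hlt : binDigit (ℓ+1) h < 2 := Nat.mod_lt _ (by norm_num)
      rw [Nat.add_zero, Nat.zero_add, Nat.mod_eq_of_lt hlt]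
      norm_num
  unfold xorBin
  rw [tsum_congr term_eq, Summable.tsum_add hgsum hdsum.summable, hdsum.tsum_eq]

lemma tendsto_aux (x x' : ℝ) (hx : x ∈ Set.Ico (0 : ℝ) 1) (hx' : x' ∈ Set.Ico (0 : ℝ) 1)
    (Ω : ℕ) (hdx : ∃ a : ℕ, x = (a : ℝ) / 2 ^ Ω) (hdx' : ∃ a : ℕ, x' = (a : ℝ) / 2 ^ Ω) :
    Filter.Tendsto (fun h : ℝ => (xorBin (x + h) x' - xorBin x x') / h)
      (nhdsWithin 0 (Set.Ioi 0)) (nhds 1) := by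
  have hδ : (0:ℝ) < (2:ℝ)^(-(Ω:ℤ)) := zpow_pos (by norm_num) _
  have hmem : Set.Ioo (0:ℝ) ((2:ℝ)^(-(Ω:ℤ))) ∈ nhdsWithin (0:ℝ) (Set.Ioi 0) :=
    Ioo_mem_nhdsGT_of_mem ⟨le_rfl, hδ⟩
  have heq : (fun h : ℝ => (xorBin (x + h) x' - xorBin x x') / h)
      =ᶠ[nhdsWithin (0:ℝ) (Set.Ioi 0)] (fun _ => 1) := by
    filter_upwards [hmem] with h hh
    rw [xorBin_key x x' hx hx' Ω hdx hdx' h hh.1 hh.2, add_sub_cancel_left,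
      div_self (ne_of_gt hh.1)]
  exact Filter.Tendsto.congr' heq.symm tendsto_const_nhds

theorem stmt_13 (x x' : ℝ) (hx : x ∈ Set.Ico (0 : ℝ) 1) (hx' : x' ∈ Set.Ico (0 : ℝ) 1)
    (Ω : ℕ) (hdx : ∃ a : ℕ, x = (a : ℝ) / 2 ^ Ω) (hdx' : ∃ a : ℕ, x' = (a : ℝ) / 2 ^ Ω) :
    (∀ h : ℝ, 0 < h → h < (2 : ℝ) ^ (-(Ω : ℤ)) → x + h < 1 →
      xorBin (x + h) x' = xorBin x x' + h) ∧
    Filter.Tendsto (fun h : ℝ => (xorBin (x + h) x' - xorBin x x') / h)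
      (nhdsWithin 0 (Set.Ioi 0)) (nhds 1) ∧
    Filter.Tendsto (fun h : ℝ => (xorBin x (x' + h) - xorBin x x') / h)
      (nhdsWithin 0 (Set.Ioi 0)) (nhds 1) := by
  refine ⟨fun h h0 h1 _ => xorBin_key x x' hx hx' Ω hdx hdx' h h0 h1,
    tendsto_aux x x' hx hx' Ω hdx hdx', ?_⟩
  have := tendsto_aux x' x hx' hx Ω hdx' hdx
  refine this.congr (fun h => ?_)
  rw [xorBin_comm x (x' + h), xorBin_comm x x']
end

section
/- For α ∈ {2, 3, 4} define the digitally-shift-invariant kernel K̈_α(x, y) := ω_α(x ⊕ y) for x, y ∈ [0,1). Then for every dyadic rational x ∈ [0,1), lim_{h → 0⁺} (K̈_α(x, x) − K̈_α(x + h, x)) / h² = +∞; equivalently, since (x + h) ⊕ x = h for sufficiently small h > 0, lim_{h → 0⁺} (ω_α(0) − ω_α(h)) / h² = +∞. -/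
noncomputable def walsh (k : ℕ) (x : ℝ) : ℝ :=
  (-1 : ℝ) ^ (∑ ℓ ∈ Finset.range (k + 1), (k / 2 ^ ℓ % 2) * binDigit (ℓ + 1) x)

def dickWeight (α k : ℕ) : ℕ :=
  (((((Finset.range (k + 1)).filter fun i => k / 2 ^ i % 2 = 1).sort (· ≤ ·)).reverse.take
        α).map (· + 1)).sum

noncomputable def omegaDick (α : ℕ) (x : ℝ) : ℝ :=
  ∑' k : ℕ, (2 : ℝ) ^ (-(dickWeight α (k + 1) : ℤ)) * walsh (k + 1) x

lemma dickWeight_zero (α : ℕ) : dickWeight α 0 = 0 := by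
  simp [dickWeight]

lemma dickWeight_zero' (k : ℕ) : dickWeight 0 k = 0 := by
  simp [dickWeight]

lemma bits_split (a r : ℕ) (hr : r < 2 ^ a) :
    ((Finset.range (2 ^ a + r + 1)).filter fun i => (2 ^ a + r) / 2 ^ i % 2 = 1)
      = insert a ((Finset.range (r + 1)).filter fun i => r / 2 ^ i % 2 = 1) := by
  ext i
  simp only [Finset.mem_insert, Finset.mem_filter, Finset.mem_range]
  have key : ∀ i, (2 ^ a + r) / 2 ^ i % 2 = if i = a then 1 else if i < a then r / 2 ^ i % 2 else 0 := by
    intro i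
    rcases lt_trichotomy i a with h | h | h
    · have hd : (2 : ℕ) ^ i ∣ 2 ^ a := pow_dvd_pow 2 h.le
      rw [Nat.add_div_of_dvd_right hd, Nat.pow_div h.le (by norm_num)]
      have ha : a - i = (a - i - 1) + 1 := by omega
      simp only [if_neg h.ne, if_pos h]
      rw [ha, pow_succ, Nat.add_comm, Nat.add_mul_mod_self_right]
    · subst h
      rw [Nat.add_div_of_dvd_right dvd_rfl, Nat.div_self (Nat.pos_of_ne_zero (by positivity)),
        Nat.div_eq_of_lt hr]
      simp
    · have : 2 ^ a + r < 2 ^ i := by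
        calc 2 ^ a + r < 2 ^ a + 2 ^ a := by omega
        _ = 2 ^ (a + 1) := by ring
        _ ≤ 2 ^ i := Nat.pow_le_pow_right (by norm_num) h
      rw [Nat.div_eq_of_lt this, if_neg (by omega), if_neg (by omega)]
  rw [key i]
  constructor
  · rintro ⟨hilt, hbit⟩
    by_cases h : i = a
    · exact Or.inl h
    · right
      rw [if_neg h] at hbit
      by_cases h2 : i < a
      · rw [if_pos h2] at hbit
        refine ⟨?_, hbit⟩
        by_contra hc
        push_neg at hc
        rw [Nat.div_eq_of_lt (lt_trans (by omega) (Nat.lt_two_pow_self (n := i)))] at hbit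
        simp at hbit
      · rw [if_neg h2] at hbit; simp at hbit
  · rintro (h | ⟨hlt, hbit⟩)
    · subst h
      exact ⟨by have := Nat.lt_two_pow_self (n := i); omega, by simp⟩
    · have hia : i < a := by
        by_contra hc
        push_neg at hc
        have : (2:ℕ) ^ a ≤ 2 ^ i := Nat.pow_le_pow_right (by norm_num) hc
        have : r < 2 ^ i := lt_of_lt_of_le hr this
        rw [Nat.div_eq_of_lt this] at hbit
        simp at hbit
      rw [if_neg hia.ne, if_pos hia]
      exact ⟨by omega, hbit⟩

open List in
lemma sort_insert_max (s : Finset ℕ) (a : ℕ) (hs : ∀ i ∈ s, i < a) :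
    (insert a s).sort (· ≤ ·) = s.sort (· ≤ ·) ++ [a] := by
  have ha : a ∉ s := fun h => (hs a h).false
  have hperm : (insert a s).sort (· ≤ ·) ~ s.sort (· ≤ ·) ++ [a] := by
    calc (insert a s).sort (· ≤ ·) ~ (insert a s).toList := Finset.sort_perm_toList _ _
      _ ~ a :: s.toList := Finset.toList_insert ha
      _ ~ a :: s.sort (· ≤ ·) := List.Perm.cons a (Finset.sort_perm_toList _ _).symm
      _ ~ s.sort (· ≤ ·) ++ [a] := (List.perm_append_singleton a _).symm
  refine List.Perm.eq_of_pairwise' (r := (· ≤ ·)) (Finset.pairwise_sort _ _) ?_ hperm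
  · rw [List.pairwise_append]
    refine ⟨Finset.pairwise_sort _ _, List.pairwise_singleton _ a, ?_⟩
    intro x hx y hy
    simp only [List.mem_singleton] at hy
    subst hy
    exact (hs x (by rwa [← Finset.mem_sort (· ≤ ·)])).le

lemma dickWeight_split (α a r : ℕ) (hα : 1 ≤ α) (hr : r < 2 ^ a) :
    dickWeight α (2 ^ a + r) = (a + 1) + dickWeight (α - 1) r := by
  unfold dickWeight
  rw [bits_split a r hr, sort_insert_max _ a ?_, List.reverse_append]
  · obtain ⟨β, rfl⟩ : ∃ β, α = β + 1 := ⟨α - 1, by omega⟩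
    simp [List.take_succ_cons]
  · intro i hi
    simp only [Finset.mem_filter, Finset.mem_range] at hi
    by_contra hc
    push_neg at hc
    have : r < 2 ^ i := lt_of_lt_of_le hr (Nat.pow_le_pow_right (by norm_num) hc)
    rw [Nat.div_eq_of_lt this] at hi
    simp at hi

lemma dickWeight_pow (α n : ℕ) (hα : 1 ≤ α) : dickWeight α (2 ^ n) = n + 1 := by
  have := dickWeight_split α n 0 hα (by positivity)
  simpa [dickWeight_zero] using this

lemma dickWeight_mono (k : ℕ) {α β : ℕ} (h : α ≤ β) : dickWeight α k ≤ dickWeight β k := by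
  unfold dickWeight
  set l := (((Finset.range (k + 1)).filter fun i => k / 2 ^ i % 2 = 1).sort (· ≤ ·)).reverse
  have h1 : l.take α = (l.take β).take α := by rw [List.take_take, min_eq_left h]
  rw [h1]
  set l' := l.take β
  conv_rhs => rw [← List.take_append_drop α l']
  rw [List.map_append, List.sum_append]
  exact Nat.le_add_right _ _


lemma sum_range_split (f : ℕ → ℝ) (m n : ℕ) :
    ∑ i ∈ Finset.range (m + n), f i
      = ∑ i ∈ Finset.range m, f i + ∑ i ∈ Finset.range n, f (m + i) := by
  rw [Finset.range_eq_Ico, ← Finset.sum_Ico_consecutive f (Nat.zero_le m) (Nat.le_add_right m n),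
    Finset.sum_Ico_eq_sum_range, Finset.sum_Ico_eq_sum_range]
  simp

noncomputable def cw (α k : ℕ) : ℝ := (2 : ℝ) ^ (-(dickWeight α k : ℤ))

lemma cw_pos (α k : ℕ) : 0 < cw α k := zpow_pos (by norm_num) _

lemma S1 (a : ℕ) : ∑ r ∈ Finset.range (2 ^ a), cw 1 r = 1 + a / 2 := by
  induction a with
  | zero => simp [cw, dickWeight_zero]
  | succ a ih =>
    have : (2 : ℕ) ^ (a + 1) = 2 ^ a + 2 ^ a := by ring
    rw [this, sum_range_split, ih]
    have hterm : ∀ r ∈ Finset.range (2 ^ a), cw 1 (2 ^ a + r) = (2 : ℝ) ^ (-(a : ℤ) - 1) := by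
      intro r hr
      simp only [Finset.mem_range] at hr
      rw [cw, dickWeight_split 1 a r le_rfl hr, dickWeight_zero']
      congr 1
      push_cast
      ring
    rw [Finset.sum_congr rfl hterm, Finset.sum_const, Finset.card_range, nsmul_eq_mul]
    have h2 : (((2 : ℕ) ^ a : ℕ) : ℝ) * (2 : ℝ) ^ (-(a : ℤ) - 1) = 1 / 2 := by
      rw [zpow_sub₀ (by norm_num : (2:ℝ) ≠ 0), zpow_neg, zpow_natCast]
      push_cast
      have h20 : (2:ℝ) ^ a ≠ 0 := by positivity
      field_simp
    rw [h2]
    push_cast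
    ring

lemma S2 (A : ℕ) : ∑ k ∈ Finset.range (2 ^ A), cw 2 k
    = 1 + ∑ a ∈ Finset.range A, (2 : ℝ) ^ (-(a : ℤ) - 1) * (1 + a / 2) := by
  induction A with
  | zero => simp [cw, dickWeight_zero]
  | succ A ih =>
    have : (2 : ℕ) ^ (A + 1) = 2 ^ A + 2 ^ A := by ring
    rw [this, sum_range_split, ih, Finset.sum_range_succ]
    have hterm : ∀ r ∈ Finset.range (2 ^ A), cw 2 (2 ^ A + r)
        = (2 : ℝ) ^ (-(A : ℤ) - 1) * cw 1 r := by
      intro r hr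
      simp only [Finset.mem_range] at hr
      rw [cw, dickWeight_split 2 A r (by norm_num) hr]
      show (2:ℝ) ^ (-(((A + 1 : ℕ) + dickWeight 1 r : ℕ)) : ℤ) = _
      rw [cw, ← zpow_add₀ (by norm_num : (2:ℝ) ≠ 0)]
      congr 1
      push_cast
      ring
    rw [Finset.sum_congr rfl hterm, ← Finset.mul_sum, S1]
    ring

lemma geom_aux (A : ℕ) : ∑ a ∈ Finset.range A, (2 : ℝ) ^ (-(a : ℤ) - 1) * (1 + a / 2)
    = 3 / 2 - ((A : ℝ) + 3) / 2 * (2 : ℝ) ^ (-(A : ℤ)) := by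
  induction A with
  | zero => norm_num
  | succ A ih =>
    rw [Finset.sum_range_succ, ih]
    have e1 : (2:ℝ) ^ (-(((A+1:ℕ)):ℤ)) = 2 ^ (-(A:ℤ)) / 2 := by
      rw [show (-((A+1:ℕ):ℤ)) = -(A:ℤ) - 1 by push_cast; ring,
        zpow_sub₀ (by norm_num : (2:ℝ) ≠ 0)]
      norm_num
    have e2 : (2:ℝ) ^ (-(A:ℤ) - 1) = 2 ^ (-(A:ℤ)) / 2 := by
      rw [zpow_sub₀ (by norm_num : (2:ℝ) ≠ 0)]
      norm_num
    rw [e1, e2]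
    push_cast
    ring

lemma partial_le (n : ℕ) {α : ℕ} (hα : 2 ≤ α) :
    ∑ k ∈ Finset.range n, cw α k ≤ 5 / 2 := by
  have h1 : ∑ k ∈ Finset.range n, cw α k ≤ ∑ k ∈ Finset.range n, cw 2 k := by
    apply Finset.sum_le_sum
    intro k _
    apply zpow_le_zpow_right₀ (by norm_num : (1:ℝ) ≤ 2)
    have hd : dickWeight 2 k ≤ dickWeight α k := dickWeight_mono k hα
    exact neg_le_neg (by exact_mod_cast hd)
  have h2 : ∑ k ∈ Finset.range n, cw 2 k ≤ ∑ k ∈ Finset.range (2 ^ n), cw 2 k := by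
    apply Finset.sum_le_sum_of_subset_of_nonneg
    · exact Finset.range_subset_range.mpr (Nat.lt_two_pow_self (n := n)).le
    · intro k _ _; exact (cw_pos 2 k).le
  have h3 : ∑ k ∈ Finset.range (2 ^ n), cw 2 k ≤ 5 / 2 := by
    rw [S2, geom_aux]
    have : 0 ≤ ((n : ℝ) + 3) / 2 * (2 : ℝ) ^ (-(n : ℤ)) := by positivity
    linarith
  linarith

lemma summable_cw {α : ℕ} (hα : 2 ≤ α) : Summable (fun k => cw α (k + 1)) := by
  have : Summable (fun k => cw α k) :=
    summable_of_sum_range_le (fun k => (cw_pos α k).le) (fun n => partial_le n hα)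
  exact (summable_nat_add_iff 1).mpr this

lemma binDigit_lt_two (ℓ : ℕ) (x : ℝ) : binDigit ℓ x < 2 := Nat.mod_lt _ (by norm_num)

lemma binDigit_zero (ℓ : ℕ) : binDigit ℓ 0 = 0 := by simp [binDigit]

lemma walsh_zero (k : ℕ) : walsh k 0 = 1 := by
  simp [walsh, binDigit_zero]

lemma walsh_abs (k : ℕ) (x : ℝ) : |walsh k x| = 1 := by
  rw [walsh, abs_pow, abs_neg, abs_one, one_pow]

lemma walsh_le_one (k : ℕ) (x : ℝ) : walsh k x ≤ 1 :=
  le_of_abs_le (walsh_abs k x).le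

-- binDigit (n+1) h = 1 when 2^{-(n+1)} ≤ h < 2^{-n}
lemma binDigit_one_of (n : ℕ) (h : ℝ) (h1 : (2:ℝ) ^ (-(n:ℤ) - 1) ≤ h) (h2 : h < (2:ℝ) ^ (-(n:ℤ))) :
    binDigit (n + 1) h = 1 := by
  have hfl : ⌊(2:ℝ) ^ (n+1) * h⌋ = 1 := by
    rw [Int.floor_eq_iff]
    constructor
    · push_cast
      calc (1:ℝ) = 2 ^ (n+1) * 2 ^ (-(n:ℤ)-1) := by
            rw [← zpow_natCast (2:ℝ) (n+1), ← zpow_add₀ (by norm_num : (2:ℝ) ≠ 0)]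
            norm_num
        _ ≤ 2 ^ (n+1) * h := by
            apply mul_le_mul_of_nonneg_left h1 (by positivity)
    · push_cast
      have hlt : (2:ℝ) ^ (n+1) * h < 2 := by
        calc (2:ℝ) ^ (n+1) * h < 2 ^ (n+1) * 2 ^ (-(n:ℤ)) := by
              apply mul_lt_mul_of_pos_left h2 (by positivity)
          _ = 2 := by
              rw [← zpow_natCast (2:ℝ) (n+1), ← zpow_add₀ (by norm_num : (2:ℝ) ≠ 0)]
              norm_num
      linarith
  rw [binDigit, hfl]
  rfl

lemma walsh_pow_neg (n : ℕ) (h : ℝ) (hd : binDigit (n + 1) h = 1) :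
    walsh (2 ^ n) h = -1 := by
  rw [walsh]
  have hsum : ∑ ℓ ∈ Finset.range (2 ^ n + 1), (2 ^ n / 2 ^ ℓ % 2) * binDigit (ℓ + 1) h
      = binDigit (n + 1) h := by
    rw [Finset.sum_eq_single_of_mem n (Finset.mem_range.mpr (by have := Nat.lt_two_pow_self (n := n); omega))]
    · rw [Nat.pow_div le_rfl (by norm_num), Nat.sub_self, pow_zero]
      norm_num
    · intro ℓ _ hne
      rcases lt_or_gt_of_ne hne with hlt | hgt
      · rw [Nat.pow_div hlt.le (by norm_num)]
        have : n - ℓ = (n - ℓ - 1) + 1 := by omega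
        rw [this, pow_succ, Nat.mul_mod_left]
        ring
      · rw [Nat.div_eq_of_lt (Nat.pow_lt_pow_right (by norm_num) hgt)]
        ring
  rw [hsum, hd, pow_one]

-- binary expansion partial sums
lemma binExp_partial (y : ℝ) (hy0 : 0 ≤ y) (hy1 : y < 1) (n : ℕ) :
    ∑ ℓ ∈ Finset.range n, (binDigit (ℓ + 1) y : ℝ) * (2:ℝ) ^ (-(ℓ:ℤ) - 1)
      = (⌊(2:ℝ) ^ n * y⌋ : ℝ) / 2 ^ n := by
  induction n with
  | zero =>
    have h0 : ⌊(2:ℝ) ^ 0 * y⌋ = 0 := by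
      rw [pow_zero, one_mul, Int.floor_eq_zero_iff]
      exact ⟨hy0, hy1⟩
    rw [h0]
    simp
  | succ n ih =>
    rw [Finset.sum_range_succ, ih]
    have hc : ⌊(2:ℝ) ^ n * y⌋ ≤ (2:ℝ) ^ n * y := Int.floor_le _
    have hc2 : (2:ℝ) ^ n * y < ⌊(2:ℝ) ^ n * y⌋ + 1 := Int.lt_floor_add_one _
    set c := ⌊(2:ℝ) ^ n * y⌋ with hcdef
    set d := ⌊(2:ℝ) ^ (n+1) * y⌋ with hddef
    have hd1 : (d:ℝ) ≤ (2:ℝ) ^ (n+1) * y := Int.floor_le _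
    have hd2 : (2:ℝ) ^ (n+1) * y < d + 1 := Int.lt_floor_add_one _
    have h2c : (2*c : ℝ) ≤ (2:ℝ) ^ (n+1) * y := by
      rw [pow_succ]
      nlinarith [hc]
    have h2c2 : (2:ℝ) ^ (n+1) * y < 2*c + 2 := by
      rw [pow_succ]
      nlinarith [hc2]
    have hdl : 2*c ≤ d := by
      rw [hddef]
      apply Int.le_floor.mpr
      push_cast
      exact h2c
    have hdu : d < 2*c + 2 := by
      have : (d:ℝ) < 2*c+2 := lt_of_le_of_lt hd1 h2c2
      exact_mod_cast this
    have hd0 : 0 ≤ d := by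
      rw [hddef]
      apply Int.le_floor.mpr
      push_cast
      positivity
    have h1 : binDigit (n+1) y = (d - 2*c).toNat := by
      unfold binDigit
      rw [← hddef]
      omega
    have hdig : (binDigit (n+1) y : ℝ) = ((d - 2*c : ℤ) : ℝ) := by
      rw [h1]
      exact_mod_cast congrArg (Int.cast : ℤ → ℝ)
        (Int.toNat_of_nonneg (by omega : (0:ℤ) ≤ d - 2*c))
    rw [hdig]
    have hne : ((2:ℝ) ^ n) ≠ 0 := by positivity
    have hne2 : ((2:ℝ) ^ (n+1)) ≠ 0 := by positivity
    have hz : (2:ℝ) ^ (-(n:ℤ) - 1) = 1 / 2 ^ (n+1) := by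
      rw [zpow_sub₀ (by norm_num : (2:ℝ) ≠ 0), zpow_neg, zpow_natCast]
      rw [pow_succ]
      field_simp
    rw [hz]
    push_cast
    field_simp
    ring

lemma binExp_hasSum (y : ℝ) (hy0 : 0 ≤ y) (hy1 : y < 1) :
    HasSum (fun ℓ : ℕ => (binDigit (ℓ + 1) y : ℝ) * (2:ℝ) ^ (-(ℓ:ℤ) - 1)) y := by
  rw [hasSum_iff_tendsto_nat_of_nonneg (fun ℓ => by positivity)]
  have heq : ∀ n : ℕ, ∑ ℓ ∈ Finset.range n, (binDigit (ℓ + 1) y : ℝ) * (2:ℝ) ^ (-(ℓ:ℤ) - 1)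
      = (⌊(2:ℝ) ^ n * y⌋ : ℝ) / 2 ^ n := fun n => binExp_partial y hy0 hy1 n
  apply Filter.Tendsto.congr (fun n => (heq n).symm)
  refine tendsto_of_tendsto_of_tendsto_of_le_of_le
    (g := fun n : ℕ => y - (1/2 : ℝ) ^ n) (h := fun _ : ℕ => y) ?_ ?_ ?_ ?_
  · have : Filter.Tendsto (fun n : ℕ => (1/2 : ℝ) ^ n) Filter.atTop (nhds 0) := by
      apply tendsto_pow_atTop_nhds_zero_of_lt_one <;> norm_num
    simpa using Filter.Tendsto.const_sub y this
  · exact tendsto_const_nhds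
  · intro n
    have h1 : (2:ℝ) ^ n * y - 1 < ⌊(2:ℝ) ^ n * y⌋ := Int.sub_one_lt_floor _
    have hp : (0:ℝ) < 2 ^ n := by positivity
    rw [le_div_iff₀ hp]
    calc (y - (1/2)^n) * 2 ^ n = 2 ^ n * y - 1 := by
          rw [div_pow, one_pow]
          field_simp
      _ ≤ ⌊(2:ℝ) ^ n * y⌋ := h1.le
  · intro n
    have h2 : (⌊(2:ℝ) ^ n * y⌋ : ℝ) ≤ 2 ^ n * y := Int.floor_le _
    have hp : (0:ℝ) < 2 ^ n := by positivity
    rw [div_le_iff₀ hp]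
    linarith

lemma binExp_tsum (y : ℝ) (hy0 : 0 ≤ y) (hy1 : y < 1) :
    ∑' ℓ : ℕ, (binDigit (ℓ + 1) y : ℝ) * (2:ℝ) ^ (-(ℓ:ℤ) - 1) = y :=
  (binExp_hasSum y hy0 hy1).tsum_eq

-- (a) high digits of dyadic rational vanish
lemma binDigit_dyadic_high (j m ℓ : ℕ) (hℓ : m < ℓ) :
    binDigit ℓ ((j : ℝ) / 2 ^ m) = 0 := by
  have key : (2:ℝ) ^ ℓ * ((j : ℝ) / 2 ^ m) = ((j * 2 ^ (ℓ - m) : ℕ) : ℝ) := by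
    have : (2:ℝ) ^ ℓ = 2 ^ (ℓ - m) * 2 ^ m := by
      rw [← pow_add]
      congr 1
      omega
    rw [this]
    push_cast
    field_simp
  rw [binDigit, key, Int.floor_natCast, Int.toNat_natCast]
  have : 2 ∣ j * 2 ^ (ℓ - m) := by
    apply Dvd.dvd.mul_left
    exact dvd_pow_self 2 (by omega : ℓ - m ≠ 0)
  omega

-- (b) low digits are unaffected by small perturbation
lemma binDigit_dyadic_low (j m ℓ : ℕ) (h : ℝ) (hℓ : ℓ ≤ m) (h0 : 0 ≤ h) (hm : h < 1 / 2 ^ m) :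
    binDigit ℓ ((j : ℝ) / 2 ^ m + h) = (j / 2 ^ (m - ℓ)) % 2 := by
  set q := j / 2 ^ (m - ℓ) with hq
  set s := j % 2 ^ (m - ℓ) with hs
  have hjq : (j : ℝ) = 2 ^ (m - ℓ) * q + s := by
    have h1 := Nat.div_add_mod j (2 ^ (m - ℓ))
    have h2 : ((2 ^ (m - ℓ) * q + s : ℕ) : ℝ) = (j : ℝ) := by rw [hq, hs, h1]
    push_cast at h2
    linarith
  have hpow : (2:ℝ) ^ m = 2 ^ (m - ℓ) * 2 ^ ℓ := by
    rw [← pow_add]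
    congr 1
    omega
  have hplt : (0:ℝ) < 2 ^ (m - ℓ) := by positivity
  have hplt2 : (0:ℝ) < 2 ^ ℓ := by positivity
  have key : (2:ℝ) ^ ℓ * ((j : ℝ) / 2 ^ m + h)
      = (q : ℝ) + ((s : ℝ) / 2 ^ (m - ℓ) + 2 ^ ℓ * h) := by
    rw [hjq, hpow]
    field_simp
    ring
  have hsb : (s : ℝ) ≤ 2 ^ (m - ℓ) - 1 := by
    have h1 : s < 2 ^ (m - ℓ) := Nat.mod_lt _ (by positivity)
    have h2 : (s + 1 : ℕ) ≤ 2 ^ (m - ℓ) := h1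
    have h3 : ((s + 1 : ℕ) : ℝ) ≤ ((2 ^ (m - ℓ) : ℕ) : ℝ) := Nat.cast_le.mpr h2
    push_cast at h3
    linarith
  have hhb : 2 ^ ℓ * h < 1 / 2 ^ (m - ℓ) := by
    rw [lt_div_iff₀ hplt]
    calc 2 ^ ℓ * h * 2 ^ (m - ℓ) = 2 ^ m * h := by rw [hpow]; ring
      _ < 1 := by
          rw [← lt_div_iff₀' (by positivity : (0:ℝ) < 2 ^ m)]
          exact hm
  have hfrac0 : 0 ≤ (s : ℝ) / 2 ^ (m - ℓ) + 2 ^ ℓ * h := by positivity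
  have hfrac1 : (s : ℝ) / 2 ^ (m - ℓ) + 2 ^ ℓ * h < 1 := by
    have : (s : ℝ) / 2 ^ (m - ℓ) ≤ 1 - 1 / 2 ^ (m - ℓ) := by
      rw [div_le_iff₀ hplt]
      field_simp
      linarith
    linarith
  have hfl : ⌊(2:ℝ) ^ ℓ * ((j : ℝ) / 2 ^ m + h)⌋ = (q : ℤ) := by
    rw [key, Int.floor_eq_iff]
    constructor
    · push_cast; linarith
    · push_cast; linarith
  rw [binDigit, hfl, Int.toNat_natCast]

-- (c) high digits of dyadic + h equal digits of h
lemma binDigit_dyadic_add_high (j m ℓ : ℕ) (h : ℝ) (hℓ : m < ℓ) (h0 : 0 ≤ h) :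
    binDigit ℓ ((j : ℝ) / 2 ^ m + h) = binDigit ℓ h := by
  have key : (2:ℝ) ^ ℓ * ((j : ℝ) / 2 ^ m + h)
      = ((j * 2 ^ (ℓ - m) : ℕ) : ℤ) + (2:ℝ) ^ ℓ * h := by
    have : (2:ℝ) ^ ℓ = 2 ^ (ℓ - m) * 2 ^ m := by
      rw [← pow_add]; congr 1; omega
    rw [mul_add, this]
    push_cast
    field_simp
  have hfl : ⌊(2:ℝ) ^ ℓ * ((j : ℝ) / 2 ^ m + h)⌋
      = ((j * 2 ^ (ℓ - m) : ℕ) : ℤ) + ⌊(2:ℝ) ^ ℓ * h⌋ := by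
    rw [key, Int.floor_intCast_add]
  have hfl0 : 0 ≤ ⌊(2:ℝ) ^ ℓ * h⌋ := Int.floor_nonneg.mpr (by positivity)
  have hdvd : 2 ∣ (j * 2 ^ (ℓ - m) : ℕ) := by
    apply Dvd.dvd.mul_left
    exact dvd_pow_self 2 (by omega : ℓ - m ≠ 0)
  rw [binDigit, binDigit, hfl]
  have hdvd' : (2:ℤ) ∣ ((j * 2 ^ (ℓ - m) : ℕ) : ℤ) := by exact_mod_cast hdvd
  omega

lemma key_lower {α : ℕ} (hα : 2 ≤ α) {h : ℝ} (h0 : 0 < h) (h1 : h < 1) :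
    h ≤ omegaDick α 0 - omegaDick α h := by
  classical
  have hex : ∃ m : ℕ, (2:ℝ) ^ (-(m:ℤ) - 1) ≤ h := by
    obtain ⟨N, hN⟩ := exists_pow_lt_of_lt_one h0 (by norm_num : (1/2 : ℝ) < 1)
    refine ⟨N, ?_⟩
    have e : (2:ℝ) ^ (-(N:ℤ) - 1) = ((2:ℝ) ^ (N+1))⁻¹ := by
      rw [← zpow_natCast (2:ℝ) (N+1), ← zpow_neg]
      congr 1
      push_cast
      ring
    have e2 : ((1:ℝ)/2) ^ N = ((2:ℝ) ^ N)⁻¹ := by rw [one_div, inv_pow]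
    rw [e]
    calc ((2:ℝ)^(N+1))⁻¹ ≤ ((2:ℝ)^N)⁻¹ := by
          apply inv_anti₀ (by positivity)
          apply pow_le_pow_right₀ (by norm_num) (by omega)
      _ = (1/2)^N := e2.symm
      _ ≤ h := hN.le
  obtain ⟨n, hn, hmin⟩ : ∃ n : ℕ, ((2:ℝ)^(-(n:ℤ)-1) ≤ h) ∧
      ∀ m < n, ¬((2:ℝ)^(-(m:ℤ)-1) ≤ h) :=
    ⟨Nat.find hex, Nat.find_spec hex, fun m hm => Nat.find_min hex hm⟩
  have hlt : h < (2:ℝ) ^ (-(n:ℤ)) := by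
    rcases Nat.eq_zero_or_pos n with h' | h'
    · subst h'; simpa using h1
    · obtain ⟨n', rfl⟩ : ∃ n', n = n' + 1 := ⟨n - 1, by omega⟩
      have hm := hmin n' (by omega)
      push_neg at hm
      calc h < (2:ℝ) ^ (-(n':ℤ) - 1) := hm
        _ = (2:ℝ) ^ (-((n'+1:ℕ):ℤ)) := by congr 1; push_cast; ring
  have Sf : Summable (fun k => cw α (k+1)) := summable_cw hα
  have Sg : Summable (fun k => cw α (k+1) * walsh (k+1) h) := by
    apply Summable.of_norm
    have hnm : ∀ k, ‖cw α (k+1) * walsh (k+1) h‖ = cw α (k+1) := by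
      intro k
      rw [norm_mul, Real.norm_eq_abs, Real.norm_eq_abs, walsh_abs, mul_one,
        abs_of_pos (cw_pos _ _)]
    exact Sf.congr (fun k => (hnm k).symm)
  have hω0 : omegaDick α 0 = ∑' k, cw α (k+1) := by
    unfold omegaDick
    apply tsum_congr
    intro k
    rw [walsh_zero, mul_one]
    rfl
  have hωh : omegaDick α h = ∑' k, cw α (k+1) * walsh (k+1) h := rfl
  have hdiff : omegaDick α 0 - omegaDick α h
      = ∑' k, (cw α (k+1) - cw α (k+1) * walsh (k+1) h) := by
    rw [hω0, hωh, ← Sf.tsum_sub Sg]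
  rw [hdiff]
  have hpos : ∀ k, 0 ≤ cw α (k+1) - cw α (k+1) * walsh (k+1) h := by
    intro k
    have h2 := walsh_le_one (k+1) h
    nlinarith [cw_pos α (k+1)]
  have hS : Summable (fun k => cw α (k+1) - cw α (k+1) * walsh (k+1) h) := Sf.sub Sg
  have hterm : h ≤ cw α (2^n - 1 + 1) - cw α (2^n - 1 + 1) * walsh (2^n - 1 + 1) h := by
    have hpow1 : 2^n - 1 + 1 = 2^n := Nat.sub_add_cancel Nat.one_le_two_pow
    rw [hpow1]
    have hcw : cw α (2^n) = (2:ℝ)^(-(n:ℤ)-1) := by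
      rw [cw, dickWeight_pow α n (by omega)]
      congr 1
      push_cast
      ring
    have hw : walsh (2^n) h = -1 := walsh_pow_neg n h (binDigit_one_of n h hn hlt)
    rw [hcw, hw]
    have e2 : (2:ℝ)^(-(n:ℤ)-1) = (2:ℝ)^(-(n:ℤ))/2 := by
      rw [zpow_sub₀ (by norm_num : (2:ℝ) ≠ 0)]
      norm_num
    rw [e2]
    linarith
  calc h ≤ _ := hterm
    _ ≤ ∑' k, (cw α (k+1) - cw α (k+1) * walsh (k+1) h) :=
        hS.le_tsum (2^n - 1) (fun j _ => hpos j)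

theorem stmt_14 (α : ℕ) (hα : α = 2 ∨ α = 3 ∨ α = 4) (x : ℝ)
    (hx : x ∈ Set.Ico (0 : ℝ) 1) (hdy : ∃ j mm : ℕ, x = (j : ℝ) / 2 ^ mm) :
    Filter.Tendsto
      (fun h : ℝ => (omegaDick α (xorBin x x) - omegaDick α (xorBin (x + h) x)) / h ^ 2)
      (nhdsWithin 0 (Set.Ioi 0)) Filter.atTop ∧
    Filter.Tendsto (fun h : ℝ => (omegaDick α 0 - omegaDick α h) / h ^ 2)
      (nhdsWithin 0 (Set.Ioi 0)) Filter.atTop := by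
  obtain ⟨j, m, hxe⟩ := hdy
  have hα2 : 2 ≤ α := by rcases hα with rfl | rfl | rfl <;> norm_num
  have hmain2 : Filter.Tendsto (fun h : ℝ => (omegaDick α 0 - omegaDick α h) / h ^ 2)
      (nhdsWithin 0 (Set.Ioi 0)) Filter.atTop := by
    apply Filter.tendsto_atTop_mono' _ ?_ tendsto_inv_nhdsGT_zero
    filter_upwards [Ioo_mem_nhdsGT (by norm_num : (0:ℝ) < 1)] with h hh
    obtain ⟨h0, h1⟩ := hh
    have hk := key_lower hα2 h0 h1
    have e1 : h⁻¹ = h / h^2 := by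
      rw [sq, div_mul_eq_div_div, div_self (ne_of_gt h0), one_div]
    rw [e1]
    gcongr
  refine ⟨?_, hmain2⟩
  have hxor0 : xorBin x x = 0 := by
    unfold xorBin
    convert tsum_zero with ℓ
    have hz : (binDigit (ℓ+1) x + binDigit (ℓ+1) x) % 2 = 0 := by omega
    rw [hz]
    simp
  have hpm : (0:ℝ) < 1 / 2 ^ m := by positivity
  have hev : ∀ᶠ h in nhdsWithin (0:ℝ) (Set.Ioi 0), xorBin (x + h) x = h := by
    filter_upwards [Ioo_mem_nhdsGT hpm] with h hh
    obtain ⟨h0, hm⟩ := hh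
    have hterm : ∀ ℓ : ℕ,
        (((binDigit (ℓ + 1) (x + h) + binDigit (ℓ + 1) x) % 2 : ℕ) : ℝ)
            * (2:ℝ) ^ (-(ℓ:ℤ) - 1)
          = (binDigit (ℓ + 1) h : ℝ) * (2:ℝ) ^ (-(ℓ:ℤ) - 1) := by
      intro ℓ
      rcases le_or_gt (ℓ + 1) m with hle | hgt
      · have e1 : binDigit (ℓ+1) (x + h) = (j / 2 ^ (m - (ℓ+1))) % 2 := by
          rw [hxe]
          exact binDigit_dyadic_low j m (ℓ+1) h hle h0.le hm
        have e2 : binDigit (ℓ+1) x = (j / 2 ^ (m - (ℓ+1))) % 2 := by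
          rw [hxe, show (j:ℝ)/2^m = (j:ℝ)/2^m + 0 by ring]
          exact binDigit_dyadic_low j m (ℓ+1) 0 hle le_rfl hpm
        have e3 : binDigit (ℓ+1) h = 0 := by
          have := binDigit_dyadic_low 0 m (ℓ+1) h hle h0.le hm
          simpa using this
        rw [e1, e2, e3]
        have hz : ((j / 2 ^ (m - (ℓ+1))) % 2 + (j / 2 ^ (m - (ℓ+1))) % 2) % 2 = 0 := by omega
        rw [hz]
      · have e1 : binDigit (ℓ+1) (x + h) = binDigit (ℓ+1) h := by
          rw [hxe]
          exact binDigit_dyadic_add_high j m (ℓ+1) h hgt h0.le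
        have e2 : binDigit (ℓ+1) x = 0 := by
          rw [hxe]
          exact binDigit_dyadic_high j m (ℓ+1) hgt
        rw [e1, e2]
        have hb : binDigit (ℓ+1) h < 2 := binDigit_lt_two _ _
        have hz : (binDigit (ℓ+1) h + 0) % 2 = binDigit (ℓ+1) h := by omega
        rw [hz]
    have h1m : h < 1 := by
      have hle1 : (1:ℝ) / 2 ^ m ≤ 1 := by
        rw [div_le_one (by positivity)]
        exact one_le_pow₀ (by norm_num)
      linarith
    calc xorBin (x+h) x = ∑' ℓ:ℕ, (binDigit (ℓ+1) h : ℝ) * (2:ℝ)^(-(ℓ:ℤ)-1) := by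
          unfold xorBin
          apply tsum_congr
          intro ℓ
          rw [show -((ℓ:ℤ)+1) = -(ℓ:ℤ)-1 by ring]
          exact hterm ℓ
      _ = h := binExp_tsum h h0.le h1m
  refine Filter.Tendsto.congr' ?_ hmain2
  filter_upwards [hev] with h hh
  rw [hxor0, hh]
end
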